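/- Small box L² bound on the sum's score: if S, T have mean zero, variances at most K, and X = S + Z_S, Y = T + Z_T with Z_S, Z_T ~ N(0,τ) independent, then for B ≥ 1, ∫∫ ρ̃(x+y)² 1{|x| ≤ B√τ, |y| ≤ B√τ} dx dy ≤ 16B⁴√τ·f₁(τ, K'), where ρ̃ is the score of X+Y, f₁(τ,K') = 8(3 + 2K'/τ)/(√τ e) with K' = Var(S+T) ≤ 4K a variance bound for S+T. -/

import Mathlib

set_option maxHeartbeats 1000000

open MeasureTheory Real

/-- The centered Gaussian density with variance `t`. -/
noncomputable def gauss (t x : ℝ) : ℝ :=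
  (Real.sqrt (2 * Real.pi * t))⁻¹ * Real.exp (-(x ^ 2) / (2 * t))

lemma gauss_pos {t : ℝ} (ht : 0 < t) (x : ℝ) : 0 < gauss t x := by
  unfold gauss
  have h : 0 < Real.sqrt (2 * Real.pi * t) := Real.sqrt_pos.2 (by positivity)
  exact mul_pos (inv_pos.2 h) (Real.exp_pos _)

lemma gauss_anti {t : ℝ} (ht : 0 < t) {u v : ℝ} (h : |u| ≤ |v|) : gauss t v ≤ gauss t u := by
  unfold gauss
  have h2 : u^2 ≤ v^2 := by nlinarith [abs_nonneg u, sq_abs u, sq_abs v]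
  have h3 : -(v^2)/(2*t) ≤ -(u^2)/(2*t) := by
    apply (div_le_div_iff_of_pos_right (by linarith)).2; linarith
  exact mul_le_mul_of_nonneg_left (Real.exp_le_exp.2 h3) (by positivity)

lemma gauss_le {t : ℝ} (ht : 0 < t) (x : ℝ) : gauss t x ≤ gauss t 0 := by
  apply gauss_anti ht; simp [abs_nonneg]

lemma gauss_eq (t x : ℝ) : gauss t x = gauss t 0 * Real.exp (-(x^2)/(2*t)) := by
  unfold gauss; ring_nf; simp

lemma continuous_gauss (t : ℝ) : Continuous (gauss t) := by
  unfold gauss; fun_prop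

lemma abs_mul_gauss_le {τ : ℝ} (hτ : 0 < τ) (u : ℝ) :
    |u| * gauss (2*τ) u ≤ (1 + 4*τ) * gauss (2*τ) 0 := by
  have h2τ : (0:ℝ) < 2*τ := by linarith
  have hg0 := gauss_pos h2τ 0
  rcases le_or_gt |u| 1 with h | h
  · have := gauss_le h2τ u
    nlinarith [gauss_pos h2τ u]
  · have hu : u ≠ 0 := by intro h0; rw [h0] at h; simp at h; linarith
    have hu2 : (0:ℝ) < u^2 := by positivity
    have ht : (0:ℝ) < u^2 / (2*(2*τ)) := by positivity
    have hexp : Real.exp (-(u^2)/(2*(2*τ))) ≤ (2*(2*τ))/u^2 := by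
      rw [neg_div, Real.exp_neg]
      have h1 : u^2/(2*(2*τ)) ≤ Real.exp (u^2/(2*(2*τ))) := by
        linarith [Real.add_one_le_exp (u^2/(2*(2*τ)))]
      calc (Real.exp (u^2/(2*(2*τ))))⁻¹ ≤ (u^2/(2*(2*τ)))⁻¹ :=
            inv_anti₀ ht h1
        _ = (2*(2*τ))/u^2 := by rw [inv_div]
    have := gauss_eq (2*τ) u
    have habs : |u| * gauss (2*τ) u ≤ |u| * (gauss (2*τ) 0 * ((2*(2*τ))/u^2)) := by
      rw [this]
      exact mul_le_mul_of_nonneg_left (mul_le_mul_of_nonneg_left hexp hg0.le) (abs_nonneg u)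
    have habs0 : (0:ℝ) < |u| := by linarith
    have hue : |u| * ((2*(2*τ))/u^2) ≤ 4*τ := by
      have : |u| * ((2*(2*τ))/u^2) = (4*τ)/|u| := by
        rw [← sq_abs u]; field_simp; ring_nf
      rw [this]
      exact div_le_self (by linarith) h.le
    calc |u| * gauss (2*τ) u ≤ |u| * ((2*(2*τ))/u^2) * gauss (2*τ) 0 := by linarith [habs]; 
      _ ≤ 4*τ * gauss (2*τ) 0 := mul_le_mul_of_nonneg_right hue hg0.le
      _ ≤ (1+4*τ) * gauss (2*τ) 0 := by nlinarith

lemma score_bound (μ : Measure (ℝ×ℝ)) [IsProbabilityMeasure μ] (τ K' : ℝ) (hτ : 0 < τ)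
    (hw2 : Integrable (fun q : ℝ×ℝ => (q.1+q.2)^2) μ)
    (hK' : ∫ q, ((q:ℝ×ℝ).1+q.2)^2 ∂μ ≤ K')
    (pZ p'Z : ℝ → ℝ)
    (hpZ : ∀ z, pZ z = ∫ q, gauss (2*τ) (z - (q.1+q.2)) ∂μ)
    (hp'Z : ∀ z, p'Z z = ∫ q, -((z - (q.1+q.2))/(2*τ)) * gauss (2*τ) (z - (q.1+q.2)) ∂μ)
    (z : ℝ) :
    (p'Z z / pZ z)^2 ≤ (27*z^2 + 75*K' + 12*τ)/(4*τ^2) := by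
  have h2τ : (0:ℝ) < 2*τ := by linarith
  have hK'0 : 0 ≤ K' := le_trans (integral_nonneg fun q => sq_nonneg _) hK'
  set M := Real.sqrt (2*K'+τ) with hMdef
  have hMsq : M^2 = 2*K'+τ := Real.sq_sqrt (by linarith)
  have hM0 : 0 < M := Real.sqrt_pos.2 (by linarith)
  set R := 2*(|z|+M) with hRdef
  have hR0 : 0 < R := by have := abs_nonneg z; positivity
  set fG := fun q : ℝ×ℝ => gauss (2*τ) (z - (q.1+q.2)) with hfGdef
  have hfGpos : ∀ q, 0 < fG q := fun q => gauss_pos h2τ _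
  have hfGcont : Continuous fG :=
    (continuous_gauss _).comp (continuous_const.sub (continuous_fst.add continuous_snd))
  have hfGint : Integrable fG μ := by
    apply (integrable_const (gauss (2*τ) 0)).mono' hfGcont.aestronglyMeasurable
    filter_upwards with q
    rw [Real.norm_eq_abs, abs_of_pos (hfGpos q)]
    exact gauss_le h2τ _
  -- lower bound on pZ
  have hgzM := gauss_pos h2τ (|z|+M)
  have hlow : ∀ q : ℝ×ℝ, gauss (2*τ) (|z|+M) * (1 - (q.1+q.2)^2/M^2) ≤ fG q := by
    intro q
    set w := q.1+q.2 with hw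
    rcases le_or_gt (w^2) (M^2) with hcase | hcase
    · have hwM : |w| ≤ M := by nlinarith [sq_abs w, abs_nonneg w]
      have h1 : gauss (2*τ) (|z|+M) ≤ gauss (2*τ) (z - w) := by
        apply gauss_anti h2τ
        rw [abs_of_nonneg (by positivity : (0:ℝ) ≤ |z|+M)]
        calc |z - w| ≤ |z| + |w| := abs_sub z w
          _ ≤ |z| + M := by linarith
      have h2 : (0:ℝ) ≤ w^2/M^2 := by positivity
      nlinarith
    · have h2 : 1 - w^2/M^2 < 0 := by
        rw [sub_neg]; exact (one_lt_div (by positivity)).2 hcase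
      nlinarith [hfGpos q]
  have hlowint : Integrable (fun q : ℝ×ℝ => gauss (2*τ) (|z|+M) * (1 - (q.1+q.2)^2/M^2)) μ :=
    ((integrable_const 1).sub (hw2.div_const _)).const_mul _
  have hI0 : 0 ≤ ∫ q, ((q:ℝ×ℝ).1+q.2)^2 ∂μ := integral_nonneg fun q => sq_nonneg _
  have hpZlow : gauss (2*τ) (|z|+M) / 2 ≤ pZ z := by
    rw [hpZ]
    have h1 : ∫ q, (gauss (2*τ) (|z|+M) * (1 - (q.1+q.2)^2/M^2)) ∂μ ≤ ∫ q, fG q ∂μ :=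
      integral_mono hlowint hfGint hlow
    have h2 : ∫ q, (gauss (2*τ) (|z|+M) * (1 - (q.1+q.2)^2/M^2)) ∂μ
        = gauss (2*τ) (|z|+M) * (1 - (∫ q, ((q:ℝ×ℝ).1+q.2)^2 ∂μ)/M^2) := by
      rw [integral_const_mul, integral_sub (integrable_const 1) (hw2.div_const _),
        integral_const, integral_div]
      simp
    have h3 : (∫ q, ((q:ℝ×ℝ).1+q.2)^2 ∂μ)/M^2 ≤ 1/2 := by
      rw [div_le_iff₀ (by positivity)]
      nlinarith
    rw [h2] at h1
    nlinarith
  have hpZpos : 0 < pZ z := lt_of_lt_of_le (by positivity) hpZlow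
  -- tail bound pointwise
  have hkey2 : ∀ q : ℝ×ℝ, |q.1+q.2| * fG q
      ≤ R * fG q + (q.1+q.2)^2/R * gauss (2*τ) (|z|+M) := by
    intro q
    set w := q.1+q.2 with hw
    rcases le_or_gt (|w|) R with hcase | hcase
    · have h2 : (0:ℝ) ≤ w^2/R * gauss (2*τ) (|z|+M) := by positivity
      nlinarith [hfGpos q]
    · have h1 : |z| + M ≤ |z - w| := by
        have h := abs_sub_abs_le_abs_sub w z
        rw [abs_sub_comm w z] at h
        linarith
      have h2 : fG q ≤ gauss (2*τ) (|z|+M) := by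
        apply gauss_anti h2τ
        rwa [abs_of_nonneg (by positivity : (0:ℝ) ≤ |z|+M)]
      have h3 : |w| ≤ w^2/R := by
        rw [le_div_iff₀ hR0]; nlinarith [sq_abs w, abs_nonneg w]
      nlinarith [hfGpos q, hgzM, abs_nonneg w]
  have habswint : Integrable (fun q : ℝ×ℝ => |q.1+q.2| * fG q) μ := by
    apply (integrable_const ((1+4*τ) * gauss (2*τ) 0 + |z| * gauss (2*τ) 0)).mono'
      ((continuous_fst.add continuous_snd).abs.mul hfGcont).aestronglyMeasurable
    filter_upwards with q
    show ‖|q.1+q.2| * fG q‖ ≤ _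
    rw [Real.norm_eq_abs,
      abs_of_nonneg (mul_nonneg (abs_nonneg _) (hfGpos q).le)]
    have h1 : |q.1+q.2| ≤ |z - (q.1+q.2)| + |z| := by
      calc |q.1+q.2| = |z - (z - (q.1+q.2))| := by rw [sub_sub_cancel]
        _ ≤ |z| + |z - (q.1+q.2)| := abs_sub _ _
        _ = |z - (q.1+q.2)| + |z| := by ring
    have h2 : |z - (q.1+q.2)| * fG q ≤ (1+4*τ) * gauss (2*τ) 0 := by
      have hbig := abs_mul_gauss_le hτ (z - (q.1+q.2))
      have h3 : fG q ≤ gauss (2*τ) (z - (q.1+q.2)) := le_of_eq rfl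
      calc |z - (q.1+q.2)| * fG q = |z - (q.1+q.2)| * gauss (2*τ) (z - (q.1+q.2)) := rfl
        _ ≤ (1+4*τ) * gauss (2*τ) 0 := hbig
    have h3 : fG q ≤ gauss (2*τ) 0 := gauss_le h2τ _
    have h4 := (hfGpos q).le
    have h7 := abs_nonneg z
    calc |q.1+q.2| * fG q ≤ (|z - (q.1+q.2)| + |z|) * fG q :=
          mul_le_mul_of_nonneg_right h1 h4
      _ = |z - (q.1+q.2)| * fG q + |z| * fG q := by ring
      _ ≤ (1+4*τ) * gauss (2*τ) 0 + |z| * gauss (2*τ) 0 :=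
          add_le_add h2 (mul_le_mul_of_nonneg_left h3 h7)
  have htail : ∫ q, |q.1+q.2| * fG q ∂μ ≤ (R + 2*K'/R) * pZ z := by
    have hupint : Integrable
        (fun q : ℝ×ℝ => R * fG q + (q.1+q.2)^2/R * gauss (2*τ) (|z|+M)) μ :=
      (hfGint.const_mul R).add ((hw2.div_const R).mul_const _)
    have h1 : ∫ q, |q.1+q.2| * fG q ∂μ
        ≤ ∫ q, (R * fG q + (q.1+q.2)^2/R * gauss (2*τ) (|z|+M)) ∂μ :=
      integral_mono habswint hupint hkey2
    have h2 : ∫ q, (R * fG q + (q.1+q.2)^2/R * gauss (2*τ) (|z|+M)) ∂μ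
        = R * pZ z + (∫ q, ((q:ℝ×ℝ).1+q.2)^2 ∂μ)/R * gauss (2*τ) (|z|+M) := by
      rw [integral_add (hfGint.const_mul R) ((hw2.div_const R).mul_const _),
        integral_const_mul, integral_mul_const, integral_div, hpZ]
    rw [h2] at h1
    have hb : gauss (2*τ) (|z|+M) ≤ 2 * pZ z := by linarith
    have hd : (∫ q, ((q:ℝ×ℝ).1+q.2)^2 ∂μ)/R ≤ K'/R := by gcongr
    have h3 : (∫ q, ((q:ℝ×ℝ).1+q.2)^2 ∂μ)/R * gauss (2*τ) (|z|+M)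
        ≤ K'/R * gauss (2*τ) (|z|+M) := mul_le_mul_of_nonneg_right hd hgzM.le
    have h4 : K'/R * gauss (2*τ) (|z|+M) ≤ K'/R * (2 * pZ z) :=
      mul_le_mul_of_nonneg_left hb (by positivity)
    have h5 : K'/R * (2*pZ z) = 2*K'/R * pZ z := by ring
    linarith
  -- main bound on |p'Z z|
  have hp' : |p'Z z| ≤ ((|z| + R + 2*K'/R)/(2*τ)) * pZ z := by
    have hmid : Integrable (fun q : ℝ×ℝ => (|z| * fG q + |q.1+q.2| * fG q)/(2*τ)) μ :=
      (((hfGint.const_mul _).add habswint).div_const _)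
    have h0 : |p'Z z| ≤ ∫ q, |z - ((q:ℝ×ℝ).1+q.2)|/(2*τ) * fG q ∂μ := by
      rw [hp'Z]
      have h := norm_integral_le_integral_norm (μ := μ)
        (f := fun q : ℝ×ℝ => -((z - (q.1+q.2))/(2*τ)) * gauss (2*τ) (z - (q.1+q.2)))
      simp only [Real.norm_eq_abs] at h
      refine h.trans (le_of_eq (integral_congr_ae (Filter.Eventually.of_forall fun q => ?_)))
      show |_| = _
      rw [abs_mul, abs_neg, abs_div, abs_of_pos h2τ, abs_of_pos (gauss_pos h2τ _)]
    have h1 : ∫ q, |z - ((q:ℝ×ℝ).1+q.2)|/(2*τ) * fG q ∂μ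
        ≤ ∫ q, (|z| * fG q + |q.1+q.2| * fG q)/(2*τ) ∂μ := by
      apply integral_mono_of_nonneg
        (Filter.Eventually.of_forall fun q =>
          mul_nonneg (by positivity) (hfGpos q).le) hmid
      filter_upwards with q
      have hfq := (hfGpos q).le
      have h := abs_sub z (q.1+q.2)
      calc |z - (q.1+q.2)|/(2*τ) * fG q
          ≤ ((|z| + |q.1+q.2|)/(2*τ)) * fG q :=
            mul_le_mul_of_nonneg_right (div_le_div_of_nonneg_right h h2τ.le) hfq
        _ = (|z| * fG q + |q.1+q.2| * fG q)/(2*τ) := by ring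
    have h2 : ∫ q, (|z| * fG q + |q.1+q.2| * fG q)/(2*τ) ∂μ
        = (|z| * pZ z + ∫ q, |(q:ℝ×ℝ).1+q.2| * fG q ∂μ)/(2*τ) := by
      rw [integral_div, integral_add (hfGint.const_mul _) habswint, integral_const_mul, hpZ]
    have h3 : (|z| * pZ z + ∫ q, |(q:ℝ×ℝ).1+q.2| * fG q ∂μ)/(2*τ)
        ≤ ((|z| + R + 2*K'/R)/(2*τ)) * pZ z := by
      rw [div_mul_eq_mul_div]
      refine div_le_div_of_nonneg_right ?_ h2τ.le
      have hx : (|z| + R + 2*K'/R) * pZ z = |z| * pZ z + (R + 2*K'/R) * pZ z := by ring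
      linarith [htail]
    linarith [h0, h1, h2.le, h2.ge, h3]
  -- conclude
  set c := (|z| + R + 2*K'/R)/(2*τ) with hcdef
  have hρ : |p'Z z / pZ z| ≤ c := by
    rw [abs_div, abs_of_pos hpZpos, div_le_iff₀ hpZpos]
    exact hp'
  have hsq : (p'Z z / pZ z)^2 ≤ c^2 := by
    rw [← sq_abs (p'Z z / pZ z)]
    exact pow_le_pow_left₀ (abs_nonneg _) hρ 2
  refine hsq.trans ?_
  -- bound c² by the explicit expression
  set sK := Real.sqrt K' with hsKdef
  set sτ := Real.sqrt τ with hsτdef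
  have hsK2 : sK^2 = K' := Real.sq_sqrt hK'0
  have hsτ2 : sτ^2 = τ := Real.sq_sqrt hτ.le
  have hsK0 : 0 ≤ sK := Real.sqrt_nonneg _
  have hsτ0 : 0 < sτ := Real.sqrt_pos.2 hτ
  have hMle : M ≤ 2*sK + sτ := by
    rw [hMdef]
    calc Real.sqrt (2*K'+τ) ≤ Real.sqrt ((2*sK+sτ)^2) := by
          apply Real.sqrt_le_sqrt; nlinarith
      _ = 2*sK + sτ := Real.sqrt_sq (by linarith)
  have hsKM : sK ≤ M := by
    rw [hMdef]
    calc sK = Real.sqrt (sK^2) := (Real.sqrt_sq hsK0).symm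
      _ ≤ Real.sqrt (2*K'+τ) := by apply Real.sqrt_le_sqrt; nlinarith
  have hKR : 2*K'/R ≤ sK := by
    have h1 : 2*K'/R ≤ 2*K'/(2*M) := by
      apply div_le_div_of_nonneg_left (by linarith) (by linarith) (by
        rw [hRdef]; nlinarith [abs_nonneg z])
    have h2 : 2*K'/(2*M) = K'/M := by ring
    have h3 : K'/M ≤ sK := by
      rw [div_le_iff₀ hM0]; nlinarith
    linarith
  have hcle : c ≤ (3*|z| + 5*sK + 2*sτ)/(2*τ) := by
    rw [hcdef]
    refine div_le_div_of_nonneg_right ?_ h2τ.le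
    linarith [hKR, hMle, hRdef.le, hRdef.ge]
  have hc0 : 0 ≤ c := by
    rw [hcdef]
    have := abs_nonneg z
    positivity
  have hnum : (3*|z| + 5*sK + 2*sτ)^2 ≤ 3*(9*z^2 + 25*K' + 4*τ) := by
    nlinarith [sq_nonneg (3*|z| - 5*sK), sq_nonneg (3*|z| - 2*sτ), sq_nonneg (5*sK - 2*sτ),
      sq_abs z]
  calc c^2 ≤ ((3*|z| + 5*sK + 2*sτ)/(2*τ))^2 := by
        apply pow_le_pow_left₀ hc0 hcle
    _ = (3*|z| + 5*sK + 2*sτ)^2/(4*τ^2) := by rw [div_pow]; ring_nf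
    _ ≤ (3*(9*z^2 + 25*K' + 4*τ))/(4*τ^2) := by gcongr
    _ = (27*z^2 + 75*K' + 12*τ)/(4*τ^2) := by ring

/-- Small box L² bound on the score of the sum: for `B ≥ 1`,
`∫∫ ρ̃(x+y)² 1{|x| ≤ B√τ, |y| ≤ B√τ} dx dy ≤ 16B⁴√τ f₁(τ,K')` where
`f₁(τ,K') = 8(3 + 2K'/τ)/(√τ e)` and `K'` bounds `Var(S+T) ≤ 4K`. -/
theorem stmt19 (μ : Measure (ℝ × ℝ)) [IsProbabilityMeasure μ] (τ K K' : ℝ)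
    (hτ : 0 < τ)
    (h1 : Integrable (fun q : ℝ × ℝ => q.1) μ)
    (h2 : Integrable (fun q : ℝ × ℝ => q.2) μ)
    (h1sq : Integrable (fun q : ℝ × ℝ => q.1 ^ 2) μ)
    (h2sq : Integrable (fun q : ℝ × ℝ => q.2 ^ 2) μ)
    (hm1 : ∫ q, (q : ℝ × ℝ).1 ∂μ = 0) (hm2 : ∫ q, (q : ℝ × ℝ).2 ∂μ = 0)
    (hv1 : ∫ q, (q : ℝ × ℝ).1 ^ 2 ∂μ ≤ K) (hv2 : ∫ q, (q : ℝ × ℝ).2 ^ 2 ∂μ ≤ K)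
    (hK' : ∫ q, ((q : ℝ × ℝ).1 + q.2) ^ 2 ∂μ ≤ K') (hK'4 : K' ≤ 4 * K)
    (pZ p'Z : ℝ → ℝ)
    (hpZ : ∀ z, pZ z = ∫ q, gauss (2 * τ) (z - (q.1 + q.2)) ∂μ)
    (hp'Z : ∀ z, p'Z z
      = ∫ q, -((z - (q.1 + q.2)) / (2 * τ)) * gauss (2 * τ) (z - (q.1 + q.2)) ∂μ) :
    ∀ B : ℝ, 1 ≤ B →
      ∫ x, ∫ y, (p'Z (x + y) / pZ (x + y)) ^ 2 *
          (if |x| ≤ B * Real.sqrt τ ∧ |y| ≤ B * Real.sqrt τ then 1 else 0)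
        ≤ 16 * B ^ 4 * Real.sqrt τ * (8 * (3 + 2 * K' / τ) / (Real.sqrt τ * Real.exp 1)) := by
  intro B hB
  have hB0 : (0:ℝ) < B := by linarith
  have hsτ : 0 < Real.sqrt τ := Real.sqrt_pos.2 hτ
  set a := B * Real.sqrt τ with hadef
  have ha0 : 0 < a := by positivity
  have hw2 : Integrable (fun q : ℝ×ℝ => (q.1+q.2)^2) μ := by
    apply ((h1sq.add h2sq).const_mul 2).mono'
      ((continuous_fst.add continuous_snd).pow 2).aestronglyMeasurable
    filter_upwards with q
    rw [Real.norm_eq_abs, abs_of_nonneg (sq_nonneg _)]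
    simp only [Pi.add_apply, Pi.pow_apply]
    nlinarith [sq_nonneg (q.1 - q.2)]
  have hK'0 : 0 ≤ K' := le_trans (integral_nonneg fun q => sq_nonneg _) hK'
  set c₀ := (108*B^2*τ + 75*K' + 12*τ)/(4*τ^2) with hc₀
  have hc₀0 : 0 ≤ c₀ := by
    apply div_nonneg ?_ (by positivity)
    nlinarith [sq_nonneg B]
  have ha2 : a^2 = B^2*τ := by rw [hadef, mul_pow, Real.sq_sqrt hτ.le]
  have key : ∀ z : ℝ, |z| ≤ 2*a → (p'Z z/pZ z)^2 ≤ c₀ := by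
    intro z hz
    refine (score_bound μ τ K' hτ hw2 hK' pZ p'Z hpZ hp'Z z).trans ?_
    rw [hc₀]
    refine div_le_div_of_nonneg_right ?_ (by positivity)
    have h1 : z^2 ≤ (2*a)^2 := by nlinarith [abs_nonneg z, sq_abs z]
    nlinarith [ha2]
  have hnn : ∀ x y : ℝ,
      0 ≤ (p'Z (x + y) / pZ (x + y)) ^ 2 * (if |x| ≤ a ∧ |y| ≤ a then 1 else 0) := by
    intro x y
    by_cases h : |x| ≤ a ∧ |y| ≤ a <;> simp [h, sq_nonneg]
  have hIub : ∀ x : ℝ, (∫ y, (p'Z (x+y)/pZ (x+y))^2 * (if |x| ≤ a ∧ |y| ≤ a then 1 else 0))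
      ≤ Set.indicator (Set.Icc (-a) a) (fun _ => 2*a*c₀) x := by
    intro x
    by_cases hx : |x| ≤ a
    · rw [Set.indicator_of_mem (Set.mem_Icc.2 (abs_le.1 hx))]
      have hle : (∫ y, (p'Z (x+y)/pZ (x+y))^2 * (if |x| ≤ a ∧ |y| ≤ a then 1 else 0))
          ≤ ∫ y, Set.indicator (Set.Icc (-a) a) (fun _ => c₀) y := by
        apply integral_mono_of_nonneg (Filter.Eventually.of_forall (hnn x))
          ((integrableOn_const (C := c₀) (by rw [Real.volume_Icc]; exact ENNReal.ofReal_ne_top)).integrable_indicator measurableSet_Icc)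
        filter_upwards with y
        by_cases hy : |y| ≤ a
        · rw [Set.indicator_of_mem (Set.mem_Icc.2 (abs_le.1 hy))]
          simp only [hx, hy, and_self, if_true, mul_one]
          apply key
          calc |x+y| ≤ |x| + |y| := abs_add_le x y
            _ ≤ 2*a := by linarith
        · rw [Set.indicator_of_notMem (fun hmem => hy (abs_le.2 (Set.mem_Icc.1 hmem)))]
          simp [hy]
      have hval : (∫ y, Set.indicator (Set.Icc (-a) a) (fun _ : ℝ => c₀) y) = 2*a*c₀ := by
        rw [integral_indicator measurableSet_Icc, setIntegral_const, Real.volume_real_Icc_of_le (by linarith), smul_eq_mul]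
        ring
      linarith
    · rw [Set.indicator_of_notMem (fun hmem => hx (abs_le.2 (Set.mem_Icc.1 hmem)))]
      have hz : ∀ y : ℝ,
          (p'Z (x+y)/pZ (x+y))^2 * (if |x| ≤ a ∧ |y| ≤ a then 1 else 0) = 0 := by
        intro y; simp [hx]
      simp only [hz, integral_zero, le_refl]
  have houter : (∫ x, ∫ y, (p'Z (x+y)/pZ (x+y))^2 * (if |x| ≤ a ∧ |y| ≤ a then 1 else 0))
      ≤ ∫ x, Set.indicator (Set.Icc (-a) a) (fun _ => 2*a*c₀) x := by
    apply integral_mono_of_nonneg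
      (Filter.Eventually.of_forall fun x => integral_nonneg (hnn x))
      ((integrableOn_const (C := 2*a*c₀) (by rw [Real.volume_Icc]; exact ENNReal.ofReal_ne_top)).integrable_indicator measurableSet_Icc)
      (Filter.Eventually.of_forall hIub)
  have houtval : (∫ x, Set.indicator (Set.Icc (-a) a) (fun _ : ℝ => 2*a*c₀) x)
      = 2*a*(2*a*c₀) := by
    rw [integral_indicator measurableSet_Icc, setIntegral_const, Real.volume_real_Icc_of_le (by linarith), smul_eq_mul]
    ring
  refine le_trans (houter.trans_eq houtval) ?_
  -- final arithmetic
  have hE : Real.exp 1 ≤ 2.7182818286 := le_of_lt Real.exp_one_lt_d9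
  have hE0 : (0:ℝ) < Real.exp 1 := Real.exp_pos 1
  have hRHS : 16*B^4*Real.sqrt τ*(8*(3+2*K'/τ)/(Real.sqrt τ*Real.exp 1))
      = 128*B^4*(3*τ+2*K')/(τ*Real.exp 1) := by
    field_simp
    ring
  have hLHS : 2*a*(2*a*c₀) = (108*B^2*τ + 75*K' + 12*τ)*B^2/τ := by
    have h4 : 2*a*(2*a*c₀) = 4*(B^2*τ)*c₀ := by rw [← ha2]; ring
    rw [h4, hc₀]
    field_simp
  rw [hLHS, hRHS, div_le_div_iff₀ hτ (by positivity)]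
  have hP1 : 1 ≤ B^2 := by nlinarith
  have hc3 : B^2 ≤ B^2*B^2 := by nlinarith [mul_le_mul_of_nonneg_left hP1 (sq_nonneg B)]
  have hN : (0:ℝ) ≤ 108*B^2*τ + 75*K' + 12*τ := by nlinarith [sq_nonneg B]
  have k1 : (108*B^2*τ + 75*K' + 12*τ)*B^2*(τ*Real.exp 1)
      ≤ (108*B^2*τ + 75*K' + 12*τ)*B^2*(τ*2.7182818286) := by
    apply mul_le_mul_of_nonneg_left (mul_le_mul_of_nonneg_left hE hτ.le)
      (mul_nonneg hN (sq_nonneg B))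
  refine k1.trans ?_
  nlinarith [mul_nonneg (mul_nonneg (sub_nonneg.2 hc3) hK'0) hτ.le,
    mul_nonneg (sub_nonneg.2 hc3) (sq_nonneg τ),
    mul_nonneg (mul_nonneg (sq_nonneg B) (sq_nonneg B)) (sq_nonneg τ),
    mul_nonneg (mul_nonneg (mul_nonneg (sq_nonneg B) (sq_nonneg B)) hK'0) hτ.le]
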